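/- Let N be a finite set with n = |N|, let x : N → ℝ, and let m be an integer with 1 ≤ m and m + 1 ≤ n. Then the normalized sum of subset maxima is monotone in the subset size: C(n, m+1) · Σ_{S ⊆ N, |S|=m} max_{t∈S} x(t) ≤ C(n, m) · Σ_{S ⊆ N, |S|=m+1} max_{t∈S} x(t). Equivalently, the average over all m-element subsets of the maximum of x is nondecreasing in m. -/

import Mathlib

open Finset

/-- Maximum of a real-valued function over a finite set (0 on the empty set). -/
noncomputable def finsetMax {α : Type*} (x : α → ℝ) (S : Finset α) : ℝ :=
  if h : S.Nonempty then S.sup' h x else 0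

lemma count_supersets {α : Type*} [DecidableEq α] (N S : Finset α) (m : ℕ)
    (hS : S ⊆ N) (hSc : S.card = m) :
    ((N.powersetCard (m + 1)).filter (fun T => S ⊆ T)).card = N.card - m := by
  have himg : (N.powersetCard (m + 1)).filter (fun T => S ⊆ T)
      = (N \ S).image (fun a => insert a S) := by
    ext T
    simp only [mem_filter, mem_powersetCard, mem_image, mem_sdiff]
    constructor
    · rintro ⟨⟨hTN, hTc⟩, hST⟩
      have hcard : (T \ S).card = 1 := by
        rw [card_sdiff_of_subset hST, hTc, hSc]; omega
      obtain ⟨a, ha⟩ := card_eq_one.mp hcard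
      have haT : a ∈ T \ S := ha ▸ mem_singleton_self a
      rw [mem_sdiff] at haT
      refine ⟨a, ⟨hTN haT.1, haT.2⟩, ?_⟩
      refine Finset.eq_of_subset_of_card_le (insert_subset haT.1 hST) ?_
      rw [card_insert_of_notMem haT.2, hSc, hTc]
    · rintro ⟨a, ⟨haN, haS⟩, rfl⟩
      exact ⟨⟨insert_subset haN hS, by rw [card_insert_of_notMem haS, hSc]⟩,
        subset_insert _ _⟩
  rw [himg, card_image_of_injOn, card_sdiff_of_subset hS, hSc]
  intro a ha b hb hab
  have hab' : insert a S = insert b S := hab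
  have : a ∈ insert b S := hab' ▸ mem_insert_self a S
  rcases mem_insert.mp this with h | h
  · exact h
  · exact absurd h (mem_sdiff.mp ha).2

/-- The normalized sum of subset maxima is monotone in the subset size:
`C(n,m+1) * Σ_{|S|=m} max x ≤ C(n,m) * Σ_{|S|=m+1} max x`. -/
theorem sum_subset_max_mono
    {α : Type*} [DecidableEq α] (N : Finset α) (x : α → ℝ) (m : ℕ)
    (hm1 : 1 ≤ m) (hmn : m + 1 ≤ N.card) :
    (N.card.choose (m + 1) : ℝ) * ∑ S ∈ N.powersetCard m, finsetMax x S ≤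
      (N.card.choose m : ℝ) * ∑ S ∈ N.powersetCard (m + 1), finsetMax x S := by
  set n := N.card with hn
  -- Key inequality: (n - m) * Σ_{|S|=m} ≤ (m+1) * Σ_{|T|=m+1}
  have key : ((n - m : ℕ) : ℝ) * ∑ S ∈ N.powersetCard m, finsetMax x S ≤
      ((m + 1 : ℕ) : ℝ) * ∑ T ∈ N.powersetCard (m + 1), finsetMax x T := by
    have swap : ∑ T ∈ N.powersetCard (m + 1), ∑ S ∈ T.powersetCard m, finsetMax x S
        = ((n - m : ℕ) : ℝ) * ∑ S ∈ N.powersetCard m, finsetMax x S := by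
      have h1 : ∀ T ∈ N.powersetCard (m + 1),
          ∑ S ∈ T.powersetCard m, finsetMax x S
            = ∑ S ∈ N.powersetCard m, if S ⊆ T then finsetMax x S else 0 := by
        intro T hT
        rw [mem_powersetCard] at hT
        rw [← sum_filter]
        apply sum_congr _ (fun _ _ => rfl)
        ext S
        simp only [mem_filter, mem_powersetCard]
        constructor
        · rintro ⟨hST, hc⟩; exact ⟨⟨hST.trans hT.1, hc⟩, hST⟩
        · rintro ⟨⟨_, hc⟩, hST⟩; exact ⟨hST, hc⟩
      rw [sum_congr rfl h1, sum_comm, Finset.mul_sum]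
      apply sum_congr rfl
      intro S hS
      rw [mem_powersetCard] at hS
      rw [← sum_filter, sum_const, count_supersets N S m hS.1 hS.2, nsmul_eq_mul]
    have bound : ∑ T ∈ N.powersetCard (m + 1), ∑ S ∈ T.powersetCard m, finsetMax x S
        ≤ ∑ T ∈ N.powersetCard (m + 1), ((m + 1 : ℕ) : ℝ) * finsetMax x T := by
      apply sum_le_sum
      intro T hT
      rw [mem_powersetCard] at hT
      have hTne : T.Nonempty := by
        rw [← card_pos, hT.2]; omega
      have hmax : ∀ S ∈ T.powersetCard m, finsetMax x S ≤ finsetMax x T := by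
        intro S hS
        rw [mem_powersetCard] at hS
        have hSne : S.Nonempty := by rw [← card_pos, hS.2]; omega
        rw [finsetMax, finsetMax, dif_pos hSne, dif_pos hTne]
        exact sup'_mono x hS.1 hSne
      calc ∑ S ∈ T.powersetCard m, finsetMax x S
          ≤ ∑ S ∈ T.powersetCard m, finsetMax x T := sum_le_sum hmax
        _ = ((m + 1 : ℕ) : ℝ) * finsetMax x T := by
            rw [sum_const, card_powersetCard, hT.2, nsmul_eq_mul,
              Nat.choose_succ_self_right]
    rw [← swap]
    calc ∑ T ∈ N.powersetCard (m + 1), ∑ S ∈ T.powersetCard m, finsetMax x S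
        ≤ ∑ T ∈ N.powersetCard (m + 1), ((m + 1 : ℕ) : ℝ) * finsetMax x T := bound
      _ = ((m + 1 : ℕ) : ℝ) * ∑ T ∈ N.powersetCard (m + 1), finsetMax x T := by
          rw [Finset.mul_sum]
  -- Combine with the binomial identity C(n,m+1)*(m+1) = C(n,m)*(n-m)
  have hpos : (0 : ℝ) < ((n - m : ℕ) : ℝ) := by
    have : 0 < n - m := by omega
    exact_mod_cast this
  rw [← mul_le_mul_iff_of_pos_right hpos]
  have hid : (n.choose (m + 1) : ℝ) * ((m + 1 : ℕ) : ℝ)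
      = (n.choose m : ℝ) * ((n - m : ℕ) : ℝ) := by
    exact_mod_cast congrArg (Nat.cast : ℕ → ℝ) (Nat.choose_succ_right_eq n m)
  calc (n.choose (m + 1) : ℝ) * (∑ S ∈ N.powersetCard m, finsetMax x S) * ((n - m : ℕ) : ℝ)
      = (n.choose (m + 1) : ℝ) * (((n - m : ℕ) : ℝ) * ∑ S ∈ N.powersetCard m, finsetMax x S) := by
        ring
    _ ≤ (n.choose (m + 1) : ℝ) * (((m + 1 : ℕ) : ℝ) * ∑ T ∈ N.powersetCard (m + 1), finsetMax x T) := by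
        apply mul_le_mul_of_nonneg_left key (by positivity)
    _ = ((n.choose (m + 1) : ℝ) * ((m + 1 : ℕ) : ℝ)) * ∑ T ∈ N.powersetCard (m + 1), finsetMax x T := by
        ring
    _ = (n.choose m : ℝ) * (∑ S ∈ N.powersetCard (m + 1), finsetMax x S) * ((n - m : ℕ) : ℝ) := by
        rw [hid]; ring
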